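/- Let ω = exp(2πi/3), ℤ[ω] = {a + bω : a, b ∈ ℤ} ⊆ ℂ, P₀ = (2 + ω)·ℤ[ω], and P = ℤ[ω] \ P₀. Let Γ be an additive subgroup of finite index in ℤ[ω], and let f : ℂ → ℂ be a map of the form f(z) = (1 + ω)^j·z or f(z) = (1 + ω)^j·conj(z) for some j ∈ {0, 1, 2, 3, 4, 5}. Then the following are equivalent: (i) f maps every coset of Γ in ℤ[ω] onto a coset of Γ in ℤ[ω]; (ii) for every coset X of Γ with X ∩ P ≠ ∅ there exists a coset Y of Γ with f(X ∩ P) = Y ∩ P. (Since translations by elements of P₀ always permute the cosets of Γ and the classes X ∩ P, this shows the coloring of ℤ[ω] induced by Γ is chirally/fully perfect for the (3⁶) tiling if and only if the induced coloring of P is.) -/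

import Mathlib

/-- The primitive cube root of unity `ω = exp(2πi/3)`. -/
noncomputable def ω : ℂ := Complex.exp (2 * (Real.pi : ℂ) * Complex.I / 3)

/-- The Eisenstein integers `ℤ[ω]`, viewed as a subset of `ℂ`. -/
noncomputable def ZW : Set ℂ := {z : ℂ | ∃ a b : ℤ, z = (a : ℂ) + (b : ℂ) * ω}

/-- The ideal `P₀ = (2 + ω)·ℤ[ω]`, the set of vertices of the `(3⁶)` tiling. -/
noncomputable def P₀ : Set ℂ := {z : ℂ | ∃ y ∈ ZW, z = (2 + ω) * y}

/-- The cosets of a subset `Γ` in `ℤ[ω]`. -/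
noncomputable def cosets (Γ : Set ℂ) : Set (Set ℂ) :=
  {X : Set ℂ | ∃ t ∈ ZW, X = {z : ℂ | z - t ∈ Γ}}

lemma omega_eq : ω = Complex.exp (((2 * Real.pi / 3 : ℝ) : ℂ) * Complex.I) := by
  unfold ω; norm_num; ring_nf

lemma omega_im : ω.im = Real.sin (2 * Real.pi / 3) := by
  rw [omega_eq, Complex.exp_ofReal_mul_I_im]

lemma omega_im_pos : 0 < ω.im := by
  rw [omega_im]
  apply Real.sin_pos_of_pos_of_lt_pi <;> nlinarith [Real.pi_pos]

lemma omega_ne_one : ω ≠ 1 := by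
  intro h
  have := omega_im_pos
  rw [h] at this; simp at this

lemma omega_cube : ω ^ 3 = 1 := by
  unfold ω
  rw [← Complex.exp_nat_mul]
  have : ((3:ℕ) : ℂ) * (2 * (Real.pi : ℂ) * Complex.I / 3) = 2 * Real.pi * Complex.I := by
    push_cast; ring
  rw [this, Complex.exp_two_pi_mul_I]

lemma omega_sq : ω ^ 2 = -1 - ω := by
  have h3 := omega_cube
  have h1 : (ω - 1) * (ω ^ 2 + ω + 1) = 0 := by linear_combination h3
  rcases mul_eq_zero.mp h1 with h | h
  · exact absurd (sub_eq_zero.mp h) omega_ne_one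
  · linear_combination h

lemma omega_abs : ‖ω‖ = 1 := by
  rw [omega_eq]; exact Complex.norm_exp_ofReal_mul_I _

lemma omega_ne_zero : ω ≠ 0 := Complex.exp_ne_zero _

lemma conj_omega : (starRingEnd ℂ) ω = -1 - ω := by
  have h : ω * (starRingEnd ℂ) ω = 1 := by
    rw [Complex.mul_conj, Complex.normSq_eq_norm_sq, omega_abs]; norm_num
  have h2 : ω * (-1 - ω) = 1 := by linear_combination -omega_sq
  have := mul_left_cancel₀ omega_ne_zero (h.trans h2.symm)
  exact this

lemma ZW_mem (a b : ℤ) : ((a : ℂ) + (b : ℂ) * ω) ∈ ZW := ⟨a, b, rfl⟩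

lemma ZW_zero : (0 : ℂ) ∈ ZW := ⟨0, 0, by norm_num⟩
lemma ZW_one : (1 : ℂ) ∈ ZW := ⟨1, 0, by norm_num⟩

lemma ZW_add {x y : ℂ} (hx : x ∈ ZW) (hy : y ∈ ZW) : x + y ∈ ZW := by
  obtain ⟨a, b, rfl⟩ := hx; obtain ⟨c, d, rfl⟩ := hy
  exact ⟨a + c, b + d, by push_cast; ring⟩

lemma ZW_sub {x y : ℂ} (hx : x ∈ ZW) (hy : y ∈ ZW) : x - y ∈ ZW := by
  obtain ⟨a, b, rfl⟩ := hx; obtain ⟨c, d, rfl⟩ := hy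
  exact ⟨a - c, b - d, by push_cast; ring⟩

lemma ZW_mul {x y : ℂ} (hx : x ∈ ZW) (hy : y ∈ ZW) : x * y ∈ ZW := by
  obtain ⟨a, b, rfl⟩ := hx; obtain ⟨c, d, rfl⟩ := hy
  exact ⟨a * c - b * d, a * d + b * c - b * d, by push_cast; linear_combination (b : ℂ) * d * omega_sq⟩

lemma ZW_neg {x : ℂ} (hx : x ∈ ZW) : -x ∈ ZW := by
  have := ZW_sub ZW_zero hx; simpa using this

lemma ZW_conj {x : ℂ} (hx : x ∈ ZW) : (starRingEnd ℂ) x ∈ ZW := by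
  obtain ⟨a, b, rfl⟩ := hx
  refine ⟨a - b, -b, ?_⟩
  simp [map_add, map_mul, conj_omega]
  push_cast; ring

lemma ZW_pow {x : ℂ} (hx : x ∈ ZW) (n : ℕ) : x ^ n ∈ ZW := by
  induction n with
  | zero => simpa using ZW_one
  | succ k ih => rw [pow_succ]; exact ZW_mul ih hx

lemma ZW_omega : ω ∈ ZW := ⟨0, 1, by norm_num⟩

lemma two_add_omega_ZW : (2 + ω) ∈ ZW := ⟨2, 1, by norm_num⟩

lemma P₀_subset_ZW : P₀ ⊆ ZW := by
  rintro z ⟨y, hy, rfl⟩; exact ZW_mul two_add_omega_ZW hy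

lemma P₀_sub {x y : ℂ} (hx : x ∈ P₀) (hy : y ∈ P₀) : x - y ∈ P₀ := by
  obtain ⟨a, ha, rfl⟩ := hx; obtain ⟨b, hb, rfl⟩ := hy
  exact ⟨a - b, ZW_sub ha hb, by ring⟩

lemma P₀_add {x y : ℂ} (hx : x ∈ P₀) (hy : y ∈ P₀) : x + y ∈ P₀ := by
  obtain ⟨a, ha, rfl⟩ := hx; obtain ⟨b, hb, rfl⟩ := hy
  exact ⟨a + b, ZW_add ha hb, by ring⟩

lemma P₀_mul {x y : ℂ} (hx : x ∈ ZW) (hy : y ∈ P₀) : x * y ∈ P₀ := by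
  obtain ⟨b, hb, rfl⟩ := hy
  exact ⟨x * b, ZW_mul hx hb, by ring⟩

lemma P₀_conj {x : ℂ} (hx : x ∈ P₀) : (starRingEnd ℂ) x ∈ P₀ := by
  obtain ⟨y, hy, rfl⟩ := hx
  refine ⟨-ω * (starRingEnd ℂ) y, ZW_mul (ZW_neg ZW_omega) (ZW_conj hy), ?_⟩
  rw [map_mul, map_add, conj_omega, map_ofNat]
  linear_combination ((starRingEnd ℂ) y) * omega_sq

lemma three_mem_P₀ : (3 : ℂ) ∈ P₀ := by
  refine ⟨1 - ω, ⟨1, -1, by push_cast; ring⟩, ?_⟩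
  linear_combination omega_sq

lemma ZW_coeffs {a b c d : ℤ} (h : (a : ℂ) + (b : ℂ) * ω = (c : ℂ) + (d : ℂ) * ω) :
    a = c ∧ b = d := by
  have him := congrArg Complex.im h
  simp [Complex.add_im, Complex.mul_im] at him
  have hbd := him.resolve_right (ne_of_gt omega_im_pos)
  have hb : b = d := by exact_mod_cast hbd
  subst hb
  have hre := congrArg Complex.re h
  simp [Complex.add_re, Complex.mul_re] at hre
  constructor
  · exact_mod_cast hre
  · rfl

lemma one_not_P₀ : (1 : ℂ) ∉ P₀ := by
  rintro ⟨y, ⟨a, b, rfl⟩, h⟩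
  have hexp : ((1 : ℤ) : ℂ) + ((0 : ℤ) : ℂ) * ω = ((2 * a - b : ℤ) : ℂ) + ((a + b : ℤ) : ℂ) * ω := by
    push_cast
    rw [show ((1:ℂ) + 0 * ω) = 1 by ring, h]
    linear_combination (b : ℂ) * omega_sq
  obtain ⟨h1, h2⟩ := ZW_coeffs hexp
  omega

lemma unit6 : ((1 : ℂ) + ω) ^ 6 = 1 := by
  have h2 : ((1 : ℂ) + ω) ^ 2 = ω := by linear_combination omega_sq
  calc ((1 : ℂ) + ω) ^ 6 = (((1 : ℂ) + ω) ^ 2) ^ 3 := by ring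
    _ = ω ^ 3 := by rw [h2]
    _ = 1 := omega_cube



/-- Let `Γ` be an additive subgroup of finite index in `ℤ[ω]`, `P = ℤ[ω] \ P₀` the set of
centers of the `(3⁶)` tiling, and `f(z) = (1+ω)^j·z` or `f(z) = (1+ω)^j·conj(z)` with
`0 ≤ j ≤ 5`.  Then `f` maps every coset of `Γ` in `ℤ[ω]` onto a coset of `Γ` if and only
if `f` permutes the color classes `X ∩ P` for cosets `X` meeting `P`. -/
theorem stmt13 (Γ : Set ℂ) (h0 : (0 : ℂ) ∈ Γ)
    (hadd : ∀ x ∈ Γ, ∀ y ∈ Γ, x + y ∈ Γ) (hneg : ∀ x ∈ Γ, -x ∈ Γ)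
    (hΓZW : Γ ⊆ ZW) (m : ℕ) (hm : 0 < m) (hidx : Nat.card (cosets Γ) = m)
    (f : ℂ → ℂ)
    (hf : ∃ j : ℕ, j ≤ 5 ∧
      ((∀ z, f z = (1 + ω) ^ j * z) ∨ (∀ z, f z = (1 + ω) ^ j * (starRingEnd ℂ) z))) :
    (∀ t ∈ ZW, ∃ t' ∈ ZW, f '' {z : ℂ | z - t ∈ Γ} = {z : ℂ | z - t' ∈ Γ}) ↔
    (∀ t ∈ ZW, ({z : ℂ | z - t ∈ Γ} ∩ (ZW \ P₀)).Nonempty →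
      ∃ t' ∈ ZW,
        f '' ({z : ℂ | z - t ∈ Γ} ∩ (ZW \ P₀)) = {z : ℂ | z - t' ∈ Γ} ∩ (ZW \ P₀)) := by
  obtain ⟨j, hj6, hform⟩ := hf
  have hΓsub : ∀ x ∈ Γ, ∀ y ∈ Γ, x - y ∈ Γ := fun x hx y hy => by
    rw [sub_eq_add_neg]; exact hadd x hx _ (hneg y hy)
  have hvZW : ((1 : ℂ) + ω) ^ (6 - j) ∈ ZW := ZW_pow (ZW_add ZW_one ZW_omega) _
  have huZW : ((1 : ℂ) + ω) ^ j ∈ ZW := ZW_pow (ZW_add ZW_one ZW_omega) _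
  have huv : ((1 : ℂ) + ω) ^ j * ((1 : ℂ) + ω) ^ (6 - j) = 1 := by
    rw [← pow_add, show j + (6 - j) = 6 from by omega, unit6]
  have hf0 : f 0 = 0 := by rcases hform with h | h <;> simp [h]
  have hfadd : ∀ x y, f (x + y) = f x + f y := by
    rcases hform with h | h <;> intro x y <;> simp [h, map_add] <;> ring
  have hfsub : ∀ x y, f (x - y) = f x - f y := by
    rcases hform with h | h <;> intro x y <;> simp [h, map_sub] <;> ring
  have hfZW : ∀ {x : ℂ}, x ∈ ZW → f x ∈ ZW := by
    rcases hform with h | h <;> intro x hx <;> rw [h x]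
    · exact ZW_mul huZW hx
    · exact ZW_mul huZW (ZW_conj hx)
  have hfP : ∀ {x : ℂ}, x ∈ P₀ → f x ∈ P₀ := by
    rcases hform with h | h <;> intro x hx <;> rw [h x]
    · exact P₀_mul huZW hx
    · exact P₀_mul huZW (P₀_conj hx)
  have hfP' : ∀ {x : ℂ}, f x ∈ P₀ → x ∈ P₀ := by
    rcases hform with h | h <;> intro x hx <;> rw [h x] at hx
    · have hx' : ((1 : ℂ) + ω) ^ (6 - j) * (((1 : ℂ) + ω) ^ j * x) = x := by
        rw [← mul_assoc, mul_comm (((1 : ℂ) + ω) ^ (6 - j)), huv, one_mul]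
      rw [← hx']; exact P₀_mul hvZW hx
    · have hx' : ((1 : ℂ) + ω) ^ (6 - j) * (((1 : ℂ) + ω) ^ j * (starRingEnd ℂ) x) =
          (starRingEnd ℂ) x := by
        rw [← mul_assoc, mul_comm (((1 : ℂ) + ω) ^ (6 - j)), huv, one_mul]
      have h1 : (starRingEnd ℂ) x ∈ P₀ := by rw [← hx']; exact P₀_mul hvZW hx
      have := P₀_conj h1; rwa [Complex.conj_conj] at this
  -- From A and B, both conclusions follow
  have main_of_AB : (∀ γ ∈ Γ, f γ ∈ Γ) → (∀ γ ∈ Γ, ∃ δ ∈ Γ, f δ = γ) →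
      ∀ t ∈ ZW, ∃ t' ∈ ZW, f '' {z : ℂ | z - t ∈ Γ} = {z : ℂ | z - t' ∈ Γ} := by
    intro A B t ht
    refine ⟨f t, hfZW ht, ?_⟩
    ext z; constructor
    · rintro ⟨x, hx, rfl⟩
      show f x - f t ∈ Γ
      rw [← hfsub]; exact A _ hx
    · intro hz
      obtain ⟨δ, hδ, hfδ⟩ := B _ hz
      refine ⟨t + δ, show t + δ - t ∈ Γ from by simpa using hδ, ?_⟩
      rw [hfadd, hfδ]; ring
  have mainP_of_AB : (∀ γ ∈ Γ, f γ ∈ Γ) → (∀ γ ∈ Γ, ∃ δ ∈ Γ, f δ = γ) →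
      ∀ t ∈ ZW, ({z : ℂ | z - t ∈ Γ} ∩ (ZW \ P₀)).Nonempty →
      ∃ t' ∈ ZW,
        f '' ({z : ℂ | z - t ∈ Γ} ∩ (ZW \ P₀)) = {z : ℂ | z - t' ∈ Γ} ∩ (ZW \ P₀) := by
    intro A B t ht _
    refine ⟨f t, hfZW ht, ?_⟩
    ext z; constructor
    · rintro ⟨x, ⟨hxt, hxZW, hxP⟩, rfl⟩
      refine ⟨?_, hfZW hxZW, fun hc => hxP (hfP' hc)⟩
      show f x - f t ∈ Γ
      rw [← hfsub]; exact A _ hxt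
    · rintro ⟨hzt, hzZW, hzP⟩
      obtain ⟨δ, hδ, hfδ⟩ := B _ hzt
      have heq : f (t + δ) = z := by rw [hfadd, hfδ]; ring
      exact ⟨t + δ, ⟨show t + δ - t ∈ Γ from by simpa using hδ,
        ZW_add ht (hΓZW hδ), fun hc => hzP (heq ▸ hfP hc)⟩, heq⟩
  constructor
  · -- forward
    intro H
    obtain ⟨t₀, ht₀ZW, h₀⟩ := H 0 ZW_zero
    have hmem0 : (0 : ℂ) ∈ f '' {z : ℂ | z - 0 ∈ Γ} :=
      ⟨0, show (0 : ℂ) - 0 ∈ Γ from by simpa using h0, hf0⟩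
    rw [h₀] at hmem0
    have ht₀Γ : t₀ ∈ Γ := by
      have h1 : (0 : ℂ) - t₀ ∈ Γ := hmem0
      have := hneg _ h1; simpa using this
    have hX0 : {z : ℂ | z - 0 ∈ Γ} = Γ := by ext z; simp
    have hY0 : {z : ℂ | z - t₀ ∈ Γ} = Γ := by
      ext z; simp only [Set.mem_setOf_eq]
      constructor
      · intro h; have := hadd _ h _ ht₀Γ; simpa using this
      · intro h; exact hΓsub z h t₀ ht₀Γ
    rw [hX0, hY0] at h₀
    have A : ∀ γ ∈ Γ, f γ ∈ Γ := fun γ hγ => h₀ ▸ Set.mem_image_of_mem f hγ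
    have B : ∀ γ ∈ Γ, ∃ δ ∈ Γ, f δ = γ := by
      intro γ hγ
      have : γ ∈ f '' Γ := h₀.symm ▸ hγ
      obtain ⟨δ, hδ, hfδ⟩ := this
      exact ⟨δ, hδ, hfδ⟩
    exact mainP_of_AB A B
  · -- backward
    intro H
    by_cases hcase : ∃ γ₀ ∈ Γ, γ₀ ∉ P₀
    · obtain ⟨γ₀, hγ₀Γ, hγ₀P⟩ := hcase
      have memL : ∀ x, x ∈ Γ → x ∉ P₀ → x ∈ {z : ℂ | z - 0 ∈ Γ} ∩ (ZW \ P₀) :=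
        fun x hx hxp => ⟨show x - 0 ∈ Γ from by simpa using hx, hΓZW hx, hxp⟩
      obtain ⟨t', ht'ZW, himg⟩ := H 0 ZW_zero ⟨γ₀, memL _ hγ₀Γ hγ₀P⟩
      have hs : f γ₀ ∈ {z : ℂ | z - t' ∈ Γ} ∩ (ZW \ P₀) := by
        rw [← himg]; exact ⟨γ₀, memL _ hγ₀Γ hγ₀P, rfl⟩
      have hst : f γ₀ - t' ∈ Γ := hs.1
      have h2γP : γ₀ + γ₀ ∉ P₀ := by
        intro hc
        apply hγ₀P
        have h3 : γ₀ * 3 ∈ P₀ := P₀_mul (hΓZW hγ₀Γ) three_mem_P₀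
        have hd : γ₀ * 3 - (γ₀ + γ₀) ∈ P₀ := P₀_sub h3 hc
        rwa [show γ₀ * 3 - (γ₀ + γ₀) = γ₀ from by ring] at hd
      have hssY : f γ₀ + f γ₀ ∈ {z : ℂ | z - t' ∈ Γ} ∩ (ZW \ P₀) := by
        rw [← hfadd, ← himg]
        exact ⟨γ₀ + γ₀, memL _ (hadd _ hγ₀Γ _ hγ₀Γ) h2γP, rfl⟩
      have hsst : f γ₀ + f γ₀ - t' ∈ Γ := hssY.1
      have hsΓ : f γ₀ ∈ Γ := by
        have hd := hΓsub _ hsst _ hst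
        rwa [show f γ₀ + f γ₀ - t' - (f γ₀ - t') = f γ₀ from by ring] at hd
      have ht'Γ : t' ∈ Γ := by
        have hd := hΓsub _ hsΓ _ hst
        rwa [show f γ₀ - (f γ₀ - t') = t' from by ring] at hd
      have A : ∀ γ ∈ Γ, f γ ∈ Γ := by
        intro γ hγ
        by_cases hp : γ ∈ P₀
        · have hmem : γ + γ₀ ∉ P₀ := by
            intro hc
            apply hγ₀P
            have hd := P₀_sub hc hp
            rwa [show γ + γ₀ - γ = γ₀ from by ring] at hd
          have himem : f γ + f γ₀ ∈ {z : ℂ | z - t' ∈ Γ} ∩ (ZW \ P₀) := by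
            rw [← hfadd, ← himg]
            exact ⟨γ + γ₀, memL _ (hadd _ hγ _ hγ₀Γ) hmem, rfl⟩
          have h1 : f γ + f γ₀ - t' ∈ Γ := himem.1
          have hd := hΓsub _ h1 _ hst
          rwa [show f γ + f γ₀ - t' - (f γ₀ - t') = f γ from by ring] at hd
        · have himem : f γ ∈ {z : ℂ | z - t' ∈ Γ} ∩ (ZW \ P₀) := by
            rw [← himg]; exact ⟨γ, memL _ hγ hp, rfl⟩
          have h1 : f γ - t' ∈ Γ := himem.1
          have hd := hadd _ h1 _ ht'Γ
          rwa [show f γ - t' + t' = f γ from by ring] at hd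
      have B : ∀ γ ∈ Γ, ∃ δ ∈ Γ, f δ = γ := by
        intro γ hγ
        by_cases hp : γ ∈ P₀
        · have hmem : γ + γ₀ ∉ P₀ := by
            intro hc
            apply hγ₀P
            have hd := P₀_sub hc hp
            rwa [show γ + γ₀ - γ = γ₀ from by ring] at hd
          have hm1 : γ + γ₀ ∈ {z : ℂ | z - t' ∈ Γ} ∩ (ZW \ P₀) :=
            ⟨hΓsub _ (hadd _ hγ _ hγ₀Γ) _ ht'Γ, hΓZW (hadd _ hγ _ hγ₀Γ), hmem⟩
          rw [← himg] at hm1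
          obtain ⟨x, hxL, hfx⟩ := hm1
          have hm0 : γ₀ ∈ {z : ℂ | z - t' ∈ Γ} ∩ (ZW \ P₀) :=
            ⟨hΓsub _ hγ₀Γ _ ht'Γ, hΓZW hγ₀Γ, hγ₀P⟩
          rw [← himg] at hm0
          obtain ⟨x₀, hx₀L, hfx₀⟩ := hm0
          have hxΓ : x ∈ Γ := by have := hxL.1; simpa using this
          have hx₀Γ : x₀ ∈ Γ := by have := hx₀L.1; simpa using this
          refine ⟨x - x₀, hΓsub _ hxΓ _ hx₀Γ, ?_⟩
          rw [hfsub, hfx, hfx₀]; ring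
        · have hm1 : γ ∈ {z : ℂ | z - t' ∈ Γ} ∩ (ZW \ P₀) :=
            ⟨hΓsub _ hγ _ ht'Γ, hΓZW hγ, hp⟩
          rw [← himg] at hm1
          obtain ⟨x, hxL, hfx⟩ := hm1
          exact ⟨x, by have := hxL.1; simpa using this, hfx⟩
      exact main_of_AB A B
    · push_neg at hcase
      obtain ⟨t', ht'ZW, himg⟩ := H 1 ZW_one
        ⟨1, show (1 : ℂ) - 1 ∈ Γ from by simpa using h0, ZW_one, one_not_P₀⟩
      have hX : {z : ℂ | z - 1 ∈ Γ} ∩ (ZW \ P₀) = {z : ℂ | z - 1 ∈ Γ} := by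
        ext z
        refine ⟨fun h => h.1, fun hz => ⟨hz, ?_, ?_⟩⟩
        · have := ZW_add (hΓZW hz) ZW_one
          rwa [show z - 1 + 1 = z from by ring] at this
        · intro hc
          apply one_not_P₀
          have hd := P₀_sub hc (hcase _ hz)
          rwa [show z - (z - 1) = 1 from by ring] at hd
      rw [hX] at himg
      have hs : f 1 ∈ {z : ℂ | z - t' ∈ Γ} ∩ (ZW \ P₀) := by
        rw [← himg]
        exact ⟨1, show (1 : ℂ) - 1 ∈ Γ from by simpa using h0, rfl⟩
      have hst : f 1 - t' ∈ Γ := hs.1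
      have hY : {z : ℂ | z - t' ∈ Γ} ∩ (ZW \ P₀) = {z : ℂ | z - t' ∈ Γ} := by
        ext y
        refine ⟨fun h => h.1, fun hy => ⟨hy, ?_, ?_⟩⟩
        · have h1 : y - t' - (f 1 - t') ∈ Γ := hΓsub _ hy _ hst
          have := ZW_add (hΓZW h1) hs.2.1
          rwa [show y - t' - (f 1 - t') + f 1 = y from by ring] at this
        · intro hc
          apply hs.2.2
          have h1 : y - t' - (f 1 - t') ∈ P₀ := hcase _ (hΓsub _ hy _ hst)
          have hd := P₀_sub hc h1
          rwa [show y - (y - t' - (f 1 - t')) = f 1 from by ring] at hd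
      rw [hY] at himg
      have A : ∀ γ ∈ Γ, f γ ∈ Γ := by
        intro γ hγ
        have h1 : f (1 + γ) ∈ {z : ℂ | z - t' ∈ Γ} := by
          rw [← himg]
          exact ⟨1 + γ, show (1 : ℂ) + γ - 1 ∈ Γ from by simpa using hγ, rfl⟩
        have h1' : f 1 + f γ - t' ∈ Γ := by rw [← hfadd]; exact h1
        have hd := hΓsub _ h1' _ hst
        rwa [show f 1 + f γ - t' - (f 1 - t') = f γ from by ring] at hd
      have B : ∀ γ ∈ Γ, ∃ δ ∈ Γ, f δ = γ := by
        intro γ hγ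
        have hm : f 1 + γ ∈ {z : ℂ | z - t' ∈ Γ} := by
          show f 1 + γ - t' ∈ Γ
          have := hadd _ hst _ hγ
          rwa [show f 1 - t' + γ = f 1 + γ - t' from by ring] at this
        rw [← himg] at hm
        obtain ⟨x, hx, hfx⟩ := hm
        refine ⟨x - 1, hx, ?_⟩
        rw [hfsub, hfx]; ring
      exact main_of_AB A B
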